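/- Let γ ∈ {2, 3, …} and β ∈ ℝ with β ∉ {0, 1, …, γ-1}. Then lim_{η → 1^+} K*_{β,γ,1,η} / Σ_{k=0}^{⌊(γ-1)/2⌋} H*_{2k,β,γ,η} = 0; i.e., the acceptance probability 1/V₂* of the rejection algorithm based on the positive binomial terms tends to 0 as η ↓ 1. -/

import Mathlib

open MeasureTheory Set Filter

/-- `K*_{β,γ,p,η} = ∫_{1/η}^1 (1-x)^(γ-1) x^(-β/p-1) dx`. -/
noncomputable def Kstar (β γ p η : ℝ) : ℝ :=
  ∫ x in (1/η)..(1:ℝ), (1 - x) ^ (γ - 1) * x ^ (-β/p - 1)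

/-- `H*_{k,β,γ,η} = binom(γ-1, k) (η^(β-k) - 1)/(β - k)`. -/
noncomputable def Hstar (k : ℕ) (β : ℝ) (γ : ℕ) (η : ℝ) : ℝ :=
  ((γ - 1).choose k : ℝ) * (η ^ (β - k) - 1) / (β - k)

/-- `(η^c - 1)/c > 0` for `η > 1`, `c ≠ 0`. -/
lemma aux_pos_div {η c : ℝ} (hη : 1 < η) (hc : c ≠ 0) : 0 < (η ^ c - 1) / c := by
  rcases hc.lt_or_gt with h | h
  · apply div_pos_of_neg_of_neg _ h
    have : η ^ c < 1 := Real.rpow_lt_one_of_one_lt_of_neg hη h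
    linarith
  · apply div_pos _ h
    have : 1 < η ^ c := Real.one_lt_rpow_iff_of_pos (by linarith) |>.mpr (Or.inl ⟨hη, h⟩)
    linarith

theorem acceptance_prob_limit_BD (γ : ℕ) (hγ : 2 ≤ γ) (β : ℝ)
    (hβ : ∀ k : ℕ, k < γ → β ≠ k) :
    Tendsto
      (fun η : ℝ =>
        Kstar β γ 1 η / ∑ k ∈ Finset.range ((γ - 1) / 2 + 1), Hstar (2 * k) β γ η)
      (nhdsWithin 1 (Ioi 1)) (nhds 0) := by
  have hβ0 : β ≠ 0 := by simpa using hβ 0 (by omega)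
  set c : ℝ := (γ : ℝ) - 1 with hc
  have hc1 : (1:ℝ) ≤ c := by
    have : (2:ℝ) ≤ (γ:ℝ) := by exact_mod_cast hγ
    simp [hc]; linarith
  have hc0 : (0:ℝ) ≤ c := by linarith
  -- key pointwise bound
  have key : ∀ η : ℝ, η ∈ Ioi (1:ℝ) →
      Kstar β γ 1 η / ∑ k ∈ Finset.range ((γ - 1) / 2 + 1), Hstar (2 * k) β γ η
        ∈ Icc (0:ℝ) ((1 - 1/η) ^ c) := by
    intro η hη
    simp only [mem_Ioi] at hη
    have hη0 : (0:ℝ) < η := by linarith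
    have hinv : (0:ℝ) < 1/η := by positivity
    have hinv1 : 1/η < 1 := by rw [div_lt_one hη0]; exact hη
    -- denominator positivity
    set S := ∑ k ∈ Finset.range ((γ - 1) / 2 + 1), Hstar (2 * k) β γ η with hS
    have hterm : ∀ k ∈ Finset.range ((γ - 1) / 2 + 1), 0 < Hstar (2 * k) β γ η := by
      intro k hk
      rw [Finset.mem_range] at hk
      have h2k : 2 * k ≤ γ - 1 := by
        have : k ≤ (γ - 1) / 2 := by omega
        omega
      have hβk : β - (2 * k : ℕ) ≠ 0 := by
        have := hβ (2 * k) (by omega)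
        intro h; apply this; linarith
      have hchoose : 0 < ((γ - 1).choose (2 * k) : ℝ) := by
        exact_mod_cast Nat.choose_pos h2k
      unfold Hstar
      rw [mul_div_assoc]
      exact mul_pos hchoose (aux_pos_div hη hβk)
    have hSpos : 0 < S := Finset.sum_pos hterm ⟨0, Finset.mem_range.mpr (Nat.succ_pos _)⟩
    -- D0 := Hstar 0 term value
    set D0 : ℝ := (η ^ β - 1) / β with hD0
    have hD0pos : 0 < D0 := aux_pos_div hη hβ0
    have hD0S : D0 ≤ S := by
      have := Finset.single_le_sum (f := fun k => Hstar (2 * k) β γ η)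
        (fun k hk => (hterm k hk).le) (Finset.mem_range.mpr (Nat.succ_pos _))
      calc D0 = Hstar (2 * 0) β γ η := by
              simp [Hstar, hD0]
           _ ≤ S := this
    -- Kstar nonneg
    have hKnn : 0 ≤ Kstar β γ 1 η := by
      apply intervalIntegral.integral_nonneg hinv1.le
      intro x hx
      have hx0 : 0 < x := lt_of_lt_of_le hinv hx.1
      have hx1 : x ≤ 1 := hx.2
      exact mul_nonneg (Real.rpow_nonneg (by linarith) _) (Real.rpow_nonneg hx0.le _)
    -- integrability
    have huIcc : uIcc (1/η) (1:ℝ) = Icc (1/η) 1 := uIcc_of_le hinv1.le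
    have hfi : IntervalIntegrable (fun x : ℝ => (1 - x) ^ c * x ^ (-β/1 - 1))
        volume (1/η) 1 := by
      apply ContinuousOn.intervalIntegrable
      rw [huIcc]
      apply ContinuousOn.mul
      · apply ContinuousOn.rpow_const (by fun_prop)
        intro x _; exact Or.inr hc0
      · apply ContinuousOn.rpow_const continuousOn_id
        intro x hx; exact Or.inl (ne_of_gt (lt_of_lt_of_le hinv hx.1))
    have hgi : IntervalIntegrable (fun x : ℝ => (1 - 1/η) ^ c * x ^ (-β - 1))
        volume (1/η) 1 := by
      apply ContinuousOn.intervalIntegrable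
      rw [huIcc]
      apply ContinuousOn.mul continuousOn_const
      apply ContinuousOn.rpow_const continuousOn_id
      intro x hx; exact Or.inl (ne_of_gt (lt_of_lt_of_le hinv hx.1))
    -- Kstar upper bound
    have hKle : Kstar β γ 1 η ≤ (1 - 1/η) ^ c * D0 := by
      have hmono : Kstar β γ 1 η ≤ ∫ x in (1/η)..(1:ℝ), (1 - 1/η) ^ c * x ^ (-β - 1) := by
        apply intervalIntegral.integral_mono_on hinv1.le hfi hgi
        intro x hx
        have hx0 : 0 < x := lt_of_lt_of_le hinv hx.1
        have h1 : (1 - x) ^ c ≤ (1 - 1/η) ^ c :=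
          Real.rpow_le_rpow (by linarith [hx.2]) (by linarith [hx.1]) hc0
        have h2 : (0:ℝ) ≤ x ^ (-β - 1) := Real.rpow_nonneg hx0.le _
        calc (1 - x) ^ c * x ^ (-β/1 - 1) = (1 - x) ^ c * x ^ (-β - 1) := by norm_num
          _ ≤ (1 - 1/η) ^ c * x ^ (-β - 1) := mul_le_mul_of_nonneg_right h1 h2
      have hval : (∫ x in (1/η)..(1:ℝ), (1 - 1/η) ^ c * x ^ (-β - 1))
          = (1 - 1/η) ^ c * D0 := by
        rw [intervalIntegral.integral_const_mul]
        congr 1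
        rw [integral_rpow (Or.inr ⟨by intro h; apply hβ0; linarith,
          by rw [huIcc]; simp only [mem_Icc, not_and]; intro h; linarith⟩)]
        have h1 : -β - 1 + 1 = -β := by ring
        rw [h1, Real.one_rpow, one_div, Real.inv_rpow hη0.le, Real.rpow_neg hη0.le, inv_inv,
          hD0, div_neg, ← neg_div, neg_sub]
      linarith [hmono, hval.le]
    -- combine
    constructor
    · exact div_nonneg hKnn hSpos.le
    · calc Kstar β γ 1 η / S ≤ ((1 - 1/η) ^ c * D0) / S := by
            gcongr
        _ = (1 - 1/η) ^ c * (D0 / S) := by rw [mul_div_assoc]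
        _ ≤ (1 - 1/η) ^ c * 1 := by
            apply mul_le_mul_of_nonneg_left _ (Real.rpow_nonneg (by linarith) _)
            exact (div_le_one hSpos).mpr hD0S
        _ = (1 - 1/η) ^ c := mul_one _
  -- squeeze
  have hU : Tendsto (fun η : ℝ => (1 - 1/η) ^ c) (nhdsWithin 1 (Ioi 1)) (nhds 0) := by
    have h1 : Tendsto (fun η : ℝ => 1 - 1/η) (nhdsWithin 1 (Ioi 1)) (nhds 0) := by
      have : ContinuousAt (fun η : ℝ => 1 - 1/η) 1 := by fun_prop (disch := norm_num)
      have h := this.tendsto.mono_left (nhdsWithin_le_nhds (s := Ioi (1:ℝ)))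
      simpa using h
    have h2 : ContinuousAt (fun x : ℝ => x ^ c) 0 :=
      Real.continuousAt_rpow_const 0 c (Or.inr hc0)
    have h3 := h2.tendsto.comp h1
    rw [Real.zero_rpow (by linarith : c ≠ 0)] at h3
    exact h3
  apply tendsto_of_tendsto_of_tendsto_of_le_of_le' tendsto_const_nhds hU
  · filter_upwards [self_mem_nhdsWithin] with η hη using (key η hη).1
  · filter_upwards [self_mem_nhdsWithin] with η hη using (key η hη).2
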